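/- Let Ω be a nonzero positive semidefinite stress matrix of framework (G,p) and let y be a point of the Cayley configuration spectrahedron F of (G,p), i.e., X(y) = X + Σ_{{i,j} missing} y_ij M^{ij} ⪰ 0. Then Ω V X(y) V^T = 0. -/

import Mathlib

open Matrix BigOperators

/-- `E^{ij}`: the symmetric matrix with 1's in entries `(i,j)` and `(j,i)`, 0 elsewhere. -/
def Eij {n : ℕ} (i j : Fin n) : Matrix (Fin n) (Fin n) ℝ :=
  Matrix.single i j 1 + Matrix.single j i 1

lemma aux_conjT_eq_transpose {a b : Type*} (A : Matrix a b ℝ) : Aᴴ = Aᵀ := by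
  ext i j; simp [Matrix.conjTranspose]

lemma aux_eq_zero_of_trace {a b : Type*} [Fintype a] [Fintype b] [DecidableEq b]
    (D : Matrix a b ℝ) (h : (Dᵀ * D).trace = 0) : D = 0 := by
  have h' : ∑ j, ∑ i, D i j * D i j = 0 := by
    simpa [Matrix.trace, Matrix.mul_apply, Matrix.diag] using h
  ext i j
  have h1 := (Finset.sum_eq_zero_iff_of_nonneg (fun j _ =>
    Finset.sum_nonneg fun i _ => mul_self_nonneg (D i j))).mp h' j (Finset.mem_univ j)
  have h2 := (Finset.sum_eq_zero_iff_of_nonneg (fun i _ =>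
    mul_self_nonneg (D i j))).mp h1 i (Finset.mem_univ i)
  simpa [mul_self_eq_zero] using h2

open scoped MatrixOrder in
lemma aux_psd_factor {m : Type*} [Fintype m] [DecidableEq m] {A : Matrix m m ℝ}
    (h : A.PosSemidef) : ∃ B : Matrix m m ℝ, A = Bᴴ * B := by
  obtain ⟨B, hB⟩ := CStarAlgebra.nonneg_iff_eq_star_mul_self.mp h.nonneg
  exact ⟨B, by rw [hB, star_eq_conjTranspose]⟩

/-- If `Ω` is a nonzero PSD stress matrix of `(G,p)` and `y` lies in the Cayley
configuration spectrahedron of `(G,p)`, then `Ω V X(y) Vᵀ = 0`. -/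
theorem stmt15 (n r : ℕ) (G : SimpleGraph (Fin n)) [DecidableRel G.Adj]
    (P : Matrix (Fin n) (Fin r) ℝ) (hPe : Pᵀ *ᵥ (fun _ => (1 : ℝ)) = 0)
    (V : Matrix (Fin n) (Fin (n - 1)) ℝ)
    (hVe : Vᵀ *ᵥ (fun _ => (1 : ℝ)) = 0) (hVV : Vᵀ * V = 1)
    (X : Matrix (Fin (n - 1)) (Fin (n - 1)) ℝ) (hX : X = Vᵀ * P * Pᵀ * V)
    (M : {q : Fin n × Fin n // q.1 < q.2 ∧ ¬ G.Adj q.1 q.2} →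
        Matrix (Fin (n - 1)) (Fin (n - 1)) ℝ)
    (hM : ∀ q, M q = (-(1/2) : ℝ) • (Vᵀ * Eij q.1.1 q.1.2 * V))
    (Ω : Matrix (Fin n) (Fin n) ℝ)
    (hΩsym : Ω.IsSymm) (hΩP : Ω * P = 0) (hΩe : Ω *ᵥ (fun _ => (1 : ℝ)) = 0)
    (hΩmiss : ∀ i j, i ≠ j → ¬ G.Adj i j → Ω i j = 0)
    (hΩpsd : Ω.PosSemidef) (hΩne : Ω ≠ 0)
    (y : {q : Fin n × Fin n // q.1 < q.2 ∧ ¬ G.Adj q.1 q.2} → ℝ)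
    (hy : (X + ∑ q, y q • M q).PosSemidef) :
    Ω * (V * (X + ∑ q, y q • M q) * Vᵀ) = 0 := by
  rcases Nat.eq_zero_or_pos n with h0 | hn1
  · subst h0; ext i j; exact i.elim0
  have hn : (n : ℝ) ≠ 0 := Nat.cast_ne_zero.mpr hn1.ne'
  have hΩt : Ωᵀ = Ω := hΩsym
  -- the averaging matrix J
  set J : Matrix (Fin n) (Fin n) ℝ := Matrix.of (fun _ _ => (n : ℝ)⁻¹) with hJ
  have hVesum : ∀ a, ∑ k, V k a = 0 := by
    intro a
    have := congrFun hVe a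
    simpa [Matrix.mulVec, dotProduct] using this
  have hΩesum : ∀ i, ∑ k, Ω i k = 0 := by
    intro i
    have := congrFun hΩe i
    simpa [Matrix.mulVec, dotProduct] using this
  have hVJ : Vᵀ * J = 0 := by
    ext a j
    simp only [Matrix.mul_apply, hJ, Matrix.of_apply, Matrix.transpose_apply,
      Matrix.zero_apply]
    rw [← Finset.sum_mul, hVesum a, zero_mul]
  have hJV : J * V = 0 := by
    ext i a
    simp only [Matrix.mul_apply, hJ, Matrix.of_apply, Matrix.zero_apply]
    rw [← Finset.mul_sum, hVesum a, mul_zero]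
  have hΩJ : Ω * J = 0 := by
    ext i j
    simp only [Matrix.mul_apply, hJ, Matrix.of_apply, Matrix.zero_apply]
    rw [← Finset.sum_mul, hΩesum i, zero_mul]
  have hJΩ : J * Ω = 0 := by
    have h := congrArg Matrix.transpose hΩJ
    have hJt : Jᵀ = J := by ext i j; simp [hJ]
    rwa [Matrix.transpose_mul, hΩt, hJt, Matrix.transpose_zero] at h
  have hJJ : J * J = J := by
    ext i j
    simp only [Matrix.mul_apply, hJ, Matrix.of_apply, Finset.sum_const,
      Finset.card_univ, Fintype.card_fin, nsmul_eq_mul]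
    field_simp
  have hVVT : (V * Vᵀ) * (V * Vᵀ) = V * Vᵀ := by
    rw [Matrix.mul_assoc V Vᵀ (V * Vᵀ), ← Matrix.mul_assoc Vᵀ V Vᵀ, hVV, Matrix.one_mul]
  have hAJ : (V * Vᵀ) * J = 0 := by rw [Matrix.mul_assoc, hVJ, Matrix.mul_zero]
  have hJA : J * (V * Vᵀ) = 0 := by rw [← Matrix.mul_assoc, hJV, Matrix.zero_mul]
  -- R := 1 - V Vᵀ - J is a symmetric idempotent of trace zero, hence zero
  set R : Matrix (Fin n) (Fin n) ℝ := 1 - V * Vᵀ - J with hR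
  have hRt : Rᵀ = R := by
    have hJt : Jᵀ = J := by ext i j; simp [hJ]
    simp [hR, Matrix.transpose_sub, Matrix.transpose_mul, hJt]
  have hRR : R * R = R := by
    simp only [hR, Matrix.sub_mul, Matrix.mul_sub, Matrix.one_mul, Matrix.mul_one,
      hVVT, hAJ, hJA, hJJ]
    abel
  have htrR : R.trace = 0 := by
    have h1 : (V * Vᵀ).trace = ((n - 1 : ℕ) : ℝ) := by
      rw [Matrix.trace_mul_comm, hVV, Matrix.trace_one]
      simp
    have h2 : J.trace = 1 := by
      simp only [Matrix.trace, Matrix.diag, hJ, Matrix.of_apply, Finset.sum_const,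
        Finset.card_univ, Fintype.card_fin, nsmul_eq_mul]
      field_simp
    rw [hR, Matrix.trace_sub, Matrix.trace_sub, Matrix.trace_one, h1, h2]
    simp only [Fintype.card_fin]
    rw [Nat.cast_sub hn1]
    push_cast
    ring
  have hR0 : R = 0 := by
    apply aux_eq_zero_of_trace
    rw [hRt, hRR, htrR]
  have hVVt : V * Vᵀ = 1 - J := by
    have h := hR0
    rw [hR, sub_sub, sub_eq_zero] at h
    rw [eq_sub_iff_add_eq]
    exact h.symm
  have hΩVV : Ω * (V * Vᵀ) = Ω := by
    rw [hVVt, Matrix.mul_sub, Matrix.mul_one, hΩJ, sub_zero]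
  have key : ∀ {m : Type} [Fintype m] (Z : Matrix (Fin n) m ℝ),
      Ω * (V * (Vᵀ * Z)) = Ω * Z := by
    intro m _ Z
    rw [← Matrix.mul_assoc V Vᵀ Z, ← Matrix.mul_assoc Ω (V * Vᵀ) Z, hΩVV]
  -- the product with X vanishes
  have hSX : Vᵀ * Ω * V * X = 0 := by
    rw [hX]
    simp only [Matrix.mul_assoc]
    rw [key (P * (Pᵀ * V)), ← Matrix.mul_assoc Ω P, hΩP, Matrix.zero_mul, Matrix.mul_zero]
  -- traces with the M q vanish
  have hstd : ∀ a b : Fin n, (Ω * Matrix.single a b 1).trace = Ω b a := by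
    intro a b
    simp [Matrix.trace, Matrix.diag, Matrix.mul_apply, Matrix.single, ite_and]
  have htrM : ∀ q, (Vᵀ * Ω * V * M q).trace = 0 := by
    intro q
    obtain ⟨⟨i, j⟩, hij, hnadj⟩ := q
    rw [hM]
    dsimp only
    rw [Matrix.mul_smul, Matrix.trace_smul]
    have hE : (Vᵀ * Ω * V * (Vᵀ * Eij i j * V)).trace = 0 := by
      have step1 : Vᵀ * Ω * V * (Vᵀ * Eij i j * V) = Vᵀ * (Ω * (Eij i j * V)) := by
        simp only [Matrix.mul_assoc]
        rw [key (Eij i j * V)]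
      rw [step1, Matrix.trace_mul_comm, Matrix.mul_assoc, Matrix.mul_assoc, hVVt]
      have hEJ : (Ω * (Eij i j * J)).trace = 0 := by
        rw [← Matrix.mul_assoc, Matrix.trace_mul_comm, ← Matrix.mul_assoc, hJΩ,
          Matrix.zero_mul, Matrix.trace_zero]
      rw [Matrix.mul_sub, Matrix.mul_one, Matrix.mul_sub, Matrix.trace_sub, hEJ, sub_zero]
      have h1 : Ω i j = 0 := hΩmiss i j hij.ne hnadj
      have h2 : Ω j i = 0 := hΩmiss j i hij.ne' (fun h => hnadj h.symm)
      rw [Eij, Matrix.mul_add, Matrix.trace_add, hstd, hstd, h1, h2, add_zero]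
    rw [hE, smul_zero]
  -- the full trace vanishes
  have htrS : (Vᵀ * Ω * V * (X + ∑ q, y q • M q)).trace = 0 := by
    rw [Matrix.mul_add, Matrix.trace_add, hSX, Matrix.trace_zero, Matrix.mul_sum,
      Matrix.trace_sum, zero_add]
    refine Finset.sum_eq_zero fun q _ => ?_
    rw [Matrix.mul_smul, Matrix.trace_smul, htrM, smul_zero]
  -- factor Ω and S and conclude
  obtain ⟨B, hB⟩ := aux_psd_factor hΩpsd
  obtain ⟨C, hC⟩ := aux_psd_factor hy
  rw [aux_conjT_eq_transpose] at hB hC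
  set S := X + ∑ q, y q • M q with hS
  set D : Matrix (Fin n) (Fin (n - 1)) ℝ := B * (V * Cᵀ) with hD
  have hD0 : D = 0 := by
    apply aux_eq_zero_of_trace
    have hDD : Dᵀ * D = (C * Vᵀ) * (Ω * (V * Cᵀ)) := by
      rw [hD, Matrix.transpose_mul, Matrix.transpose_mul, Matrix.transpose_transpose, hB]
      simp only [Matrix.mul_assoc]
    rw [hDD, Matrix.trace_mul_comm]
    have : Ω * (V * Cᵀ) * (C * Vᵀ) = Ω * (V * (S * Vᵀ)) := by
      rw [hC]
      simp only [Matrix.mul_assoc]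
    rw [this]
    have : (Ω * (V * (S * Vᵀ))).trace = (Vᵀ * Ω * V * S).trace := by
      rw [← Matrix.mul_assoc, ← Matrix.mul_assoc, Matrix.trace_mul_comm]
      simp only [Matrix.mul_assoc]
    rw [this, htrS]
  have hgoal : Ω * (V * S * Vᵀ) = Bᵀ * (D * (C * Vᵀ)) := by
    rw [hB, hC, hD]
    simp only [Matrix.mul_assoc]
  rw [hgoal, hD0, Matrix.zero_mul, Matrix.mul_zero]
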